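/- Explicit upper bound for the principal root of the Robin–Bessel equation: let n ≥ 2 and α ∈ [−1, 0], and suppose x ∈ (0, j_{n/2,1}) satisfies x·J_{n/2+1}(x)/J_{n/2}(x) = 1 + α. Then x² ≤ (1/2)(n+2)(n+4)(√(1 + 4(1+α)/(n+4)) − 1). -/

import Mathlib

/-- Bessel function of the first kind. -/
noncomputable def besselJ (ν x : ℝ) : ℝ :=
  ∑' k : ℕ, (-1 : ℝ) ^ k * (x / 2) ^ (ν + 2 * (k : ℝ)) /
    (Nat.factorial k * Real.Gamma (ν + k + 1))

/-- The first positive zero of the Bessel function `J ν`. -/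
noncomputable def besselJZero (ν : ℝ) : ℝ :=
  sInf {x : ℝ | 0 < x ∧ besselJ ν x = 0}

noncomputable def gB (ν : ℝ) (u : ℝ) : ℝ :=
  ∑' k : ℕ, (-1 : ℝ) ^ k * u ^ k / (Nat.factorial k * Real.Gamma (ν + k + 1))

lemma gamma_fact_le (ν : ℝ) (hν : 0 ≤ ν) (k : ℕ) :
    (Nat.factorial k : ℝ) * Real.Gamma (ν + 1) ≤ Real.Gamma (ν + k + 1) := by
  induction k with
  | zero => simp
  | succ k ih =>
    have h1 : Real.Gamma ((ν + k + 1) + 1) = (ν + k + 1) * Real.Gamma (ν + k + 1) :=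
      Real.Gamma_add_one (by positivity)
    have h2 : ν + (k+1:ℕ) + 1 = (ν + k + 1) + 1 := by push_cast; ring
    rw [h2, h1]
    have hk1 : ((k+1 : ℕ) : ℝ) ≤ ν + k + 1 := by push_cast; linarith
    have hpos : (0:ℝ) < Real.Gamma (ν + 1) := Real.Gamma_pos_of_pos (by linarith)
    calc ((k+1).factorial : ℝ) * Real.Gamma (ν+1)
        = (k+1 : ℕ) * ((k.factorial : ℝ) * Real.Gamma (ν+1)) := by
          rw [Nat.factorial_succ]; push_cast; ring
      _ ≤ (ν + k + 1) * Real.Gamma (ν + k + 1) := by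
          apply mul_le_mul hk1 ih (by positivity) (by linarith)

lemma gamma_pos (ν : ℝ) (hν : 0 ≤ ν) (k : ℕ) : (0:ℝ) < Real.Gamma (ν + k + 1) :=
  Real.Gamma_pos_of_pos (by positivity)

lemma gamma_le_gamma (ν : ℝ) (hν : 0 ≤ ν) (k : ℕ) :
    Real.Gamma (ν + 1) ≤ Real.Gamma (ν + k + 1) := by
  have h := gamma_fact_le ν hν k
  have hf : (1:ℝ) ≤ (Nat.factorial k : ℝ) := by exact_mod_cast Nat.one_le_iff_ne_zero.mpr k.factorial_ne_zero
  have hpos : (0:ℝ) < Real.Gamma (ν + 1) := Real.Gamma_pos_of_pos (by linarith)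
  nlinarith

lemma abs_term_le (ν : ℝ) (hν : 0 ≤ ν) (k : ℕ) (r : ℝ) (hr : 0 ≤ r) :
    r ^ k / (Nat.factorial k * Real.Gamma (ν + k + 1)) ≤
      (1 / Real.Gamma (ν + 1)) * (r ^ k / Nat.factorial k) := by
  have hpos : (0:ℝ) < Real.Gamma (ν + 1) := Real.Gamma_pos_of_pos (by linarith)
  have hg := gamma_pos ν hν k
  have hf : (0:ℝ) < (Nat.factorial k : ℝ) := by positivity
  rw [show (1 / Real.Gamma (ν+1)) * (r ^ k / Nat.factorial k)
      = r ^ k / (Nat.factorial k * Real.Gamma (ν+1)) by field_simp]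
  apply div_le_div_of_nonneg_left (by positivity) (by positivity)
  exact mul_le_mul_of_nonneg_left (gamma_le_gamma ν hν k) hf.le

lemma summable_gB_aux (ν : ℝ) (hν : 0 ≤ ν) (r : ℝ) (hr : 0 ≤ r) :
    Summable (fun k : ℕ => r ^ k / (Nat.factorial k * Real.Gamma (ν + k + 1))) := by
  apply Summable.of_nonneg_of_le (fun k => by positivity) (abs_term_le ν hν · r hr)
  exact (Real.summable_pow_div_factorial r).mul_left _

lemma summable_gB (ν : ℝ) (hν : 0 ≤ ν) (u : ℝ) :
    Summable (fun k : ℕ => (-1:ℝ) ^ k * u ^ k / (Nat.factorial k * Real.Gamma (ν + k + 1))) := by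
  apply Summable.of_norm
  have := summable_gB_aux ν hν |u| (abs_nonneg u)
  apply this.congr
  intro k
  have hg := gamma_pos ν hν k
  rw [Real.norm_eq_abs, abs_div, abs_mul, abs_pow, abs_pow, abs_neg, abs_one, one_pow, one_mul,
    abs_mul, Nat.abs_cast, abs_of_pos hg]

lemma gB_zero (ν : ℝ) (hν : 0 ≤ ν) : gB ν 0 = 1 / Real.Gamma (ν + 1) := by
  unfold gB
  rw [tsum_eq_single 0]
  · simp
  · intro k hk
    simp [zero_pow hk]

lemma deriv_term_shift (ν : ℝ) (hν : 0 ≤ ν) (y : ℝ) (m : ℕ) :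
    (-1:ℝ)^(m+1) * (((m+1:ℕ):ℝ) * y^m) / (Nat.factorial (m+1) * Real.Gamma (ν + (m+1:ℕ) + 1))
    = -((-1:ℝ)^m * y^m / (Nat.factorial m * Real.Gamma ((ν+1) + m + 1))) := by
  have h1 : ν + ((m+1:ℕ):ℝ) + 1 = (ν+1) + m + 1 := by push_cast; ring
  have hg : (0:ℝ) < Real.Gamma ((ν+1) + m + 1) := gamma_pos (ν+1) (by linarith) m
  rw [h1, Nat.factorial_succ]
  have hf : (0:ℝ) < (Nat.factorial m : ℝ) := by positivity
  push_cast
  field_simp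
  ring

lemma summable_deriv_bound (ν : ℝ) (hν : 0 ≤ ν) (R : ℝ) (hR : 0 ≤ R) :
    Summable (fun k : ℕ => (k:ℝ) * R ^ (k-1) / (Nat.factorial k * Real.Gamma (ν + k + 1))) := by
  rw [← summable_nat_add_iff 1]
  apply ((summable_gB_aux (ν+1) (by linarith) R hR)).congr
  intro m
  have h1 : ν + ((m+1:ℕ):ℝ) + 1 = (ν+1) + m + 1 := by push_cast; ring
  have hg : (0:ℝ) < Real.Gamma ((ν+1) + m + 1) := gamma_pos (ν+1) (by linarith) m
  have hf : (0:ℝ) < (Nat.factorial m : ℝ) := by positivity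
  rw [h1, Nat.factorial_succ, Nat.add_sub_cancel]
  push_cast
  field_simp

lemma gB_hasDerivAt (ν : ℝ) (hν : 0 ≤ ν) (u : ℝ) :
    HasDerivAt (gB ν) (-gB (ν+1) u) u := by
  set R := |u| + 1 with hR
  have hRpos : 0 < R := by positivity
  have huR : u ∈ Set.Ioo (-R) R := by
    constructor <;> cases abs_cases u <;> simp only [hR] <;> linarith
  set bnd := fun k : ℕ => (k:ℝ) * R ^ (k-1) / (Nat.factorial k * Real.Gamma (ν + k + 1)) with hbnd
  have hsum_bnd : Summable bnd := summable_deriv_bound ν hν R hRpos.le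
  set g' := fun (k : ℕ) (y : ℝ) => (-1:ℝ)^k * ((k:ℝ) * y^(k-1)) / (Nat.factorial k * Real.Gamma (ν + k + 1)) with hg'def
  have hterm : ∀ (k : ℕ) (y : ℝ),
      HasDerivAt (fun z => (-1:ℝ)^k * z^k / (Nat.factorial k * Real.Gamma (ν + k + 1))) (g' k y) y := by
    intro k y
    have := ((hasDerivAt_pow k y).const_mul ((-1:ℝ)^k)).div_const ((Nat.factorial k : ℝ) * Real.Gamma (ν + k + 1))
    exact this
  have hbound : ∀ (k : ℕ) (y : ℝ), y ∈ Set.Ioo (-R) R → ‖g' k y‖ ≤ bnd k := by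
    intro k y hy
    have hg := gamma_pos ν hν k
    have hyR : |y| ≤ R := by
      rw [abs_le]; exact ⟨hy.1.le, hy.2.le⟩
    simp only [hg'def, hbnd, Real.norm_eq_abs, abs_div, abs_mul, abs_pow, abs_neg, abs_one,
      one_pow, one_mul, Nat.abs_cast, abs_of_pos hg]
    apply div_le_div_of_nonneg_right _ (by positivity)
    apply mul_le_mul_of_nonneg_left _ (Nat.cast_nonneg k)
    calc |y|^(k-1) ≤ R^(k-1) := pow_le_pow_left₀ (abs_nonneg y) hyR _
      _ = R^(k-1) := rfl
  have hsum0 : Summable (fun k : ℕ => (-1:ℝ)^k * u^k / (Nat.factorial k * Real.Gamma (ν + k + 1))) :=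
    summable_gB ν hν u
  have hmain := hasDerivAt_tsum_of_isPreconnected hsum_bnd isOpen_Ioo
    (convex_Ioo (-R) R).isPreconnected (fun k y _ => hterm k y) hbound huR hsum0 huR
  have hderiv_eq : (∑' k, g' k u) = -gB (ν+1) u := by
    have hsumg' : Summable (fun k => g' k u) :=
      Summable.of_norm_bounded hsum_bnd (fun k => hbound k u huR)
    rw [hsumg'.tsum_eq_zero_add]
    have h0 : g' 0 u = 0 := by simp [hg'def]
    rw [h0, zero_add]
    have : ∀ m : ℕ, g' (m+1) u = -((-1:ℝ)^m * u^m / (Nat.factorial m * Real.Gamma ((ν+1) + m + 1))) := by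
      intro m
      have := deriv_term_shift ν hν u m
      simpa [hg'def] using this
    rw [tsum_congr this, tsum_neg]
    rfl
  rw [← hderiv_eq]
  exact hmain

lemma gB_recurrence (ν : ℝ) (hν : 0 ≤ ν) (u : ℝ) :
    gB ν u + u * gB (ν+2) u = (ν+1) * gB (ν+1) u := by
  have ha := summable_gB ν hν u
  have hb := summable_gB (ν+1) (by linarith) u
  have key : gB ν u - (ν+1) * gB (ν+1) u = -(u * gB (ν+2) u) := by
    have h1 : gB ν u - (ν+1) * gB (ν+1) u
        = ∑' k : ℕ, ((-1:ℝ)^k * u^k / (Nat.factorial k * Real.Gamma (ν + k + 1))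
            - (ν+1) * ((-1:ℝ)^k * u^k / (Nat.factorial k * Real.Gamma ((ν+1) + k + 1)))) := by
      unfold gB
      rw [← tsum_mul_left (a := ν+1), ← ha.tsum_sub (hb.mul_left (ν+1))]
    set f := fun k : ℕ => (-1:ℝ)^k * u^k * k / (Nat.factorial k * Real.Gamma (ν + k + 2)) with hf
    have h2 : ∀ k : ℕ, ((-1:ℝ)^k * u^k / (Nat.factorial k * Real.Gamma (ν + k + 1))
            - (ν+1) * ((-1:ℝ)^k * u^k / (Nat.factorial k * Real.Gamma ((ν+1) + k + 1)))) = f k := by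
      intro k
      have hg1 : (0:ℝ) < Real.Gamma (ν + k + 1) := gamma_pos ν hν k
      have hgam : Real.Gamma (ν + k + 2) = (ν + k + 1) * Real.Gamma (ν + k + 1) := by
        have := Real.Gamma_add_one (s := ν + k + 1) (by positivity)
        rw [show ν + (k:ℝ) + 1 + 1 = ν + k + 2 by ring] at this
        exact this
      have hg2 : (0:ℝ) < Real.Gamma (ν + k + 2) := by rw [hgam]; positivity
      have he : (ν+1) + (k:ℝ) + 1 = ν + k + 2 := by ring
      rw [he, hf]
      have hfk : (0:ℝ) < (Nat.factorial k : ℝ) := by positivity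
      field_simp
      rw [hgam]; ring
    have hsumf : Summable f := by
      apply (ha.sub (hb.mul_left (ν+1))).congr
      intro k; exact h2 k
    rw [h1, tsum_congr h2]
    have hf0 : f 0 = 0 := by simp [hf]
    rw [hsumf.tsum_eq_zero_add, hf0, zero_add]
    have h3 : ∀ m : ℕ, f (m+1) = -(u * ((-1:ℝ)^m * u^m / (Nat.factorial m * Real.Gamma ((ν+2) + m + 1)))) := by
      intro m
      have he : ν + ((m+1:ℕ):ℝ) + 2 = (ν+2) + m + 1 := by push_cast; ring
      have hg : (0:ℝ) < Real.Gamma ((ν+2) + m + 1) := gamma_pos (ν+2) (by linarith) m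
      have hfm : (0:ℝ) < (Nat.factorial m : ℝ) := by positivity
      simp only [hf, he, Nat.factorial_succ]
      push_cast
      field_simp
      ring
    rw [tsum_congr h3, tsum_neg, tsum_mul_left]
    rfl
  linarith [key]

lemma besselJ_eq (ν : ℝ) (hν : 0 ≤ ν) (t : ℝ) (ht : 0 < t) :
    besselJ ν t = (t/2) ^ ν * gB ν (t^2/4) := by
  have h2 : 0 < t/2 := by linarith
  unfold besselJ gB
  rw [← tsum_mul_left]
  apply tsum_congr
  intro k
  have hsplit : (t/2) ^ (ν + 2*(k:ℝ)) = (t/2)^ν * (t^2/4)^k := by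
    rw [Real.rpow_add h2]
    congr 1
    rw [show (2*(k:ℝ)) = ((2*k : ℕ) : ℝ) by push_cast; ring, Real.rpow_natCast,
      pow_mul]
    congr 1
    field_simp; ring
  rw [hsplit]; ring

lemma gB_continuous (ν : ℝ) (hν : 0 ≤ ν) : Continuous (gB ν) :=
  continuous_iff_continuousAt.2 fun u => (gB_hasDerivAt ν hν u).continuousAt

lemma F_hasDerivAt (μ : ℝ) (hμ : 0 ≤ μ) (u : ℝ) (hu : 0 < u) :
    HasDerivAt (fun w => w ^ (μ+1) * gB (μ+1) w) (u ^ μ * gB μ u) u := by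
  have h1 : HasDerivAt (fun w : ℝ => w ^ (μ+1)) ((μ+1) * u ^ μ) u := by
    have := Real.hasDerivAt_rpow_const (x := u) (p := μ+1) (Or.inl hu.ne')
    simpa using this
  have h2 := gB_hasDerivAt (μ+1) (by linarith) u
  have h3 : HasDerivAt (fun w => w ^ (μ+1) * gB (μ+1) w) _ u := h1.mul h2
  convert h3 using 1
  have hrec := gB_recurrence μ hμ u
  have hup : u ^ (μ+1) = u ^ μ * u := by
    rw [Real.rpow_add hu, Real.rpow_one]
  rw [hup]
  have : gB μ u = (μ+1) * gB (μ+1) u - u * gB (μ+2) u := by linarith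
  rw [this]
  have he : μ + 1 + 1 = μ + 2 := by ring
  rw [he]
  ring

lemma gB_pos_step (μ : ℝ) (hμ : 0 ≤ μ) (b : ℝ)
    (h : ∀ w ∈ Set.Ioo (0:ℝ) b, 0 < gB μ w) :
    ∀ w ∈ Set.Ioo (0:ℝ) b, 0 < gB (μ+1) w := by
  intro u hu
  set F := fun w : ℝ => w ^ (μ+1) * gB (μ+1) w with hF
  have hcont : ContinuousOn F (Set.Icc 0 u) := by
    apply ContinuousOn.mul _ ((gB_continuous (μ+1) (by linarith)).continuousOn)
    intro w _
    exact (Real.continuousAt_rpow_const w (μ+1) (Or.inr (by linarith))).continuousWithinAt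
  have hderiv : ∀ w ∈ interior (Set.Icc (0:ℝ) u), 0 < deriv F w := by
    rw [interior_Icc]
    intro w hw
    have hw0 : 0 < w := hw.1
    have hwb : w ∈ Set.Ioo (0:ℝ) b := ⟨hw0, lt_trans hw.2 hu.2⟩
    rw [(F_hasDerivAt μ hμ w hw0).deriv]
    exact mul_pos (Real.rpow_pos_of_pos hw0 μ) (h w hwb)
  have hmono : StrictMonoOn F (Set.Icc 0 u) :=
    strictMonoOn_of_deriv_pos (convex_Icc 0 u) hcont (by simpa using hderiv)
  have h0u : (0:ℝ) ∈ Set.Icc (0:ℝ) u := Set.left_mem_Icc.2 hu.1.le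
  have huu : u ∈ Set.Icc (0:ℝ) u := Set.right_mem_Icc.2 hu.1.le
  have := hmono h0u huu hu.1
  have hF0 : F 0 = 0 := by
    simp only [hF]
    rw [Real.zero_rpow (by linarith)]
    ring
  rw [hF0] at this
  simp only [hF] at this
  have hup : 0 < u ^ (μ+1) := Real.rpow_pos_of_pos hu.1 (μ+1)
  by_contra hle
  push_neg at hle
  nlinarith [mul_nonpos_of_nonneg_of_nonpos hup.le hle]

lemma gB_pos_below_zero (ν : ℝ) (hν : 0 ≤ ν) (hj : 0 < besselJZero ν) :
    ∀ u ∈ Set.Ioo (0:ℝ) ((besselJZero ν)^2/4), 0 < gB ν u := by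
  set j := besselJZero ν with hjdef
  intro u₀ hu₀
  by_contra hle
  push_neg at hle
  have hg0 : 0 < gB ν 0 := by
    rw [gB_zero ν hν]
    exact div_pos one_pos (Real.Gamma_pos_of_pos (by linarith))
  have hcont : ContinuousOn (gB ν) (Set.Icc 0 u₀) := (gB_continuous ν hν).continuousOn
  have hivt := intermediate_value_Icc' (le_of_lt hu₀.1) hcont
  have h0mem : (0:ℝ) ∈ Set.Icc (gB ν u₀) (gB ν 0) := ⟨hle, hg0.le⟩
  obtain ⟨u₁, hu₁mem, hu₁⟩ := hivt h0mem
  have hu₁pos : 0 < u₁ := by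
    rcases (lt_or_eq_of_le hu₁mem.1) with h | h
    · exact h
    · exfalso; rw [← h] at hu₁; linarith
  set t₁ := 2 * Real.sqrt u₁ with ht₁
  have ht₁pos : 0 < t₁ := by positivity
  have ht₁sq : t₁^2/4 = u₁ := by
    rw [ht₁, mul_pow, Real.sq_sqrt hu₁pos.le]; ring
  have hJzero : besselJ ν t₁ = 0 := by
    rw [besselJ_eq ν hν t₁ ht₁pos, ht₁sq, hu₁]
    ring
  have ht₁lt : t₁ < j := by
    have h1 : u₁ ≤ u₀ := hu₁mem.2
    have h2 : u₀ < j^2/4 := hu₀.2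
    have : Real.sqrt u₁ < j/2 := by
      rw [show j/2 = Real.sqrt ((j/2)^2) by rw [Real.sqrt_sq (by positivity)]]
      apply Real.sqrt_lt_sqrt hu₁pos.le
      nlinarith
    linarith [this]
  have hmem : t₁ ∈ {x : ℝ | 0 < x ∧ besselJ ν x = 0} := ⟨ht₁pos, hJzero⟩
  have hbdd : BddBelow {x : ℝ | 0 < x ∧ besselJ ν x = 0} := ⟨0, fun y hy => hy.1.le⟩
  have := csInf_le hbdd hmem
  rw [hjdef] at ht₁lt
  unfold besselJZero at ht₁lt
  linarith

lemma quad_bound (B s S : ℝ) (hB : 0 < B) (hs : 0 ≤ s) (hS : 1 ≤ S)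
    (h : s^2 + 2*B*s ≤ B^2*(S^2-1)) : s ≤ B*(S-1) := by
  by_contra h'
  push_neg at h'
  have hm : 0 ≤ B*(S-1) := mul_nonneg hB.le (by linarith)
  have hsq : (B*(S-1))^2 < s^2 := by nlinarith
  nlinarith

lemma convert_fin (n : ℕ) (α x : ℝ)
    (hpoly : 2*(x^2/4)*((n:ℝ)/2+1)*((n:ℝ)/2+2) + 2*(x^2/4)^2
      ≤ (1+α)*((n:ℝ)/2+1)^2*((n:ℝ)/2+2)) :
    x^4 + ((n:ℝ)+2)*((n:ℝ)+4)*x^2 ≤ (1+α)*((n:ℝ)+2)^2*((n:ℝ)+4) := by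
  nlinarith [hpoly]

lemma final_step (n : ℕ) (α x S : ℝ) (hα0 : 0 ≤ 1+α)
    (hS0 : 0 ≤ S) (hS_sq : S^2 = 1 + 4*(1+α)/((n:ℝ)+4))
    (hfin : x^4 + ((n:ℝ)+2)*((n:ℝ)+4)*x^2 ≤ (1+α)*((n:ℝ)+2)^2*((n:ℝ)+4)) :
    x^2 ≤ 1/2*((n:ℝ)+2)*((n:ℝ)+4)*(S-1) := by
  have hn4 : (0:ℝ) < (n:ℝ)+4 := by positivity
  have harg : 0 ≤ 4*(1+α)/((n:ℝ)+4) := by positivity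
  have hS1 : 1 ≤ S := by nlinarith [hS_sq, hS0, harg]
  have hα_eq : 1+α = ((n:ℝ)+4)*(S^2-1)/4 := by
    field_simp at hS_sq
    linarith
  have hq : (x^2)^2 + 2*((1/2)*((n:ℝ)+2)*((n:ℝ)+4))*(x^2)
      ≤ ((1/2)*((n:ℝ)+2)*((n:ℝ)+4))^2*(S^2-1) := by
    rw [hα_eq] at hfin
    nlinarith [hfin]
  exact quad_bound ((1/2)*((n:ℝ)+2)*((n:ℝ)+4)) (x^2) S (by positivity) (sq_nonneg x) hS1 hq

set_option maxHeartbeats 1000000 in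
theorem principal_root_upper_bound (n : ℕ) (hn : 2 ≤ n) (α : ℝ)
    (hα : α ∈ Set.Icc (-1 : ℝ) 0) (x : ℝ)
    (hx : x ∈ Set.Ioo 0 (besselJZero ((n : ℝ) / 2)))
    (heq : x * besselJ ((n : ℝ) / 2 + 1) x / besselJ ((n : ℝ) / 2) x = 1 + α) :
    x ^ 2 ≤ (1 / 2) * (n + 2) * (n + 4) * (Real.sqrt (1 + 4 * (1 + α) / (n + 4)) - 1) := by
  set ν := (n : ℝ) / 2 with hνdef
  have hν1 : 1 ≤ ν := by
    rw [hνdef]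
    have : (2:ℝ) ≤ n := by exact_mod_cast hn
    linarith
  have hν0 : (0:ℝ) ≤ ν := by linarith
  obtain ⟨hx0, hxj⟩ := hx
  set j := besselJZero ν with hjdef
  have hj0 : 0 < j := lt_trans hx0 hxj
  set b := j^2/4 with hbdef
  set u := x^2/4 with hudef
  have hu0 : 0 < u := by positivity
  have hub : u < b := by
    rw [hudef, hbdef]
    nlinarith
  have humem : u ∈ Set.Ioo (0:ℝ) b := ⟨hu0, hub⟩
  -- positivity chain
  have P0 : ∀ w ∈ Set.Ioo (0:ℝ) b, 0 < gB ν w := gB_pos_below_zero ν hν0 hj0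
  have P1 : ∀ w ∈ Set.Ioo (0:ℝ) b, 0 < gB (ν+1) w := gB_pos_step ν hν0 b P0
  have P2' : ∀ w ∈ Set.Ioo (0:ℝ) b, 0 < gB (ν+1+1) w := gB_pos_step (ν+1) (by linarith) b P1
  have e2 : ν + 1 + 1 = ν + 2 := by ring
  have P2 : ∀ w ∈ Set.Ioo (0:ℝ) b, 0 < gB (ν+2) w := by rw [← e2]; exact P2'
  have P3' : ∀ w ∈ Set.Ioo (0:ℝ) b, 0 < gB (ν+2+1) w := gB_pos_step (ν+2) (by linarith) b P2
  have e3 : ν + 2 + 1 = ν + 3 := by ring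
  have P3 : ∀ w ∈ Set.Ioo (0:ℝ) b, 0 < gB (ν+3) w := by rw [← e3]; exact P3'
  set g0 := gB ν u with hg0def
  set g1 := gB (ν+1) u with hg1def
  set g2 := gB (ν+2) u with hg2def
  set g3 := gB (ν+3) u with hg3def
  have hg0 : 0 < g0 := P0 u humem
  have hg1 : 0 < g1 := P1 u humem
  have hg2 : 0 < g2 := P2 u humem
  have hg3 : 0 < g3 := P3 u humem
  -- the equation in terms of gB
  have hx2 : 0 < x/2 := by linarith
  have hJ0 : besselJ ν x = (x/2)^ν * g0 := besselJ_eq ν hν0 x hx0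
  have hJ1 : besselJ (ν+1) x = (x/2)^(ν+1) * g1 := besselJ_eq (ν+1) (by linarith) x hx0
  have hJ0pos : 0 < besselJ ν x := by
    rw [hJ0]; exact mul_pos (Real.rpow_pos_of_pos hx2 ν) hg0
  rw [div_eq_iff hJ0pos.ne'] at heq
  rw [hJ0, hJ1, Real.rpow_add hx2, Real.rpow_one] at heq
  have hA : (0:ℝ) < (x/2)^ν := Real.rpow_pos_of_pos hx2 ν
  have hkey : 2*u*g1 = (1+α)*g0 := by
    apply mul_left_cancel₀ hA.ne'
    rw [hudef]
    linear_combination heq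
  -- recurrences
  have hrec1 : g0 + u * g2 = (ν+1) * g1 := gB_recurrence ν hν0 u
  have hrec2 : g1 + u * g3 = (ν+2) * g2 := by
    have := gB_recurrence (ν+1) (by linarith) u
    rw [e2] at this
    rw [show ν+1+2 = ν+3 by ring] at this
    linarith
  -- polynomial inequality
  have hug2 : 0 < u * g2 := mul_pos hu0 hg2
  have hug3 : 0 < u * g3 := mul_pos hu0 hg3
  have hpoly : 2*u*(ν+1)*(ν+2) + 2*u^2 ≤ (1+α)*(ν+1)^2*(ν+2) := by
    have h2 : (ν+1)*((1+α)*g0) = 2*u*g0 + 2*u^2*g2 := by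
      linear_combination (-(ν+1))*hkey + (-(2*u))*hrec1
    have h3 : g1 ≤ (ν+2) * g2 := by linarith
    have h4 : g0 ≤ (ν+1) * g1 := by linarith
    have h4' : (ν+1)*g1 ≤ (ν+1)*((ν+2)*g2) := mul_le_mul_of_nonneg_left h3 (by linarith)
    have h5 : g0 ≤ (ν+1)*((ν+2)*g2) := le_trans h4 h4'
    have h5' : 2*u^2*g0 ≤ 2*u^2*((ν+1)*((ν+2)*g2)) :=
      mul_le_mul_of_nonneg_left h5 (by positivity)
    have h2' : ((ν+1)*(ν+2)) * ((ν+1)*((1+α)*g0)) = ((ν+1)*(ν+2))*(2*u*g0 + 2*u^2*g2) := by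
      linear_combination ((ν+1)*(ν+2))*h2
    have h7 : g0 * (2*u*(ν+1)*(ν+2) + 2*u^2) ≤ g0 * ((1+α)*(ν+1)^2*(ν+2)) := by
      nlinarith [h2', h5']
    exact le_of_mul_le_mul_left h7 hg0
  -- convert to n and x
  have hα0 : 0 ≤ 1 + α := by linarith [hα.1]
  have hfin : x^4 + ((n:ℝ)+2)*((n:ℝ)+4)*x^2 ≤ (1+α)*((n:ℝ)+2)^2*((n:ℝ)+4) := by
    rw [hudef, hνdef] at hpoly
    exact convert_fin n α x hpoly
  have hS_sq : (Real.sqrt (1 + 4 * (1 + α) / ((n:ℝ) + 4)))^2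
      = 1 + 4 * (1 + α) / ((n:ℝ) + 4) := by
    apply Real.sq_sqrt
    have : (0:ℝ) < (n:ℝ)+4 := by positivity
    positivity
  exact final_step n α x _ hα0 (Real.sqrt_nonneg _) hS_sq hfin
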